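/- Let W_n be the half-wheel graph with center w_c and n outer nodes, with n odd. There exists an extraction order of W_n rooted at the center node w_c, together with an extraction label set ordering Ω, whose extraction label width lw(G⃗, Ω) = 1 + max label set size equals 3. Concretely, orienting all radial edges outward from w_c and orienting outer edges alternately so that all odd-indexed outer nodes are confluence end nodes, the label sets {w_1, w_3}, {w_3, w_5}, ..., {w_{n−2}, w_n} form a running intersection ordering at the root in which every out-edge's confluence label set is contained in some listed set, and all label sets have size at most 2. -/

import Mathlib

/-- A directed path in the digraph `A` from `i` to `j`, given as its list of vertices. -/
def DiPath {V : Type*} (A : V → V → Prop) (i j : V) (l : List V) : Prop :=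
  List.Chain' A l ∧ l.head? = some i ∧ l.getLast? = some j ∧ l.Nodup ∧ 2 ≤ l.length

/-- A confluence from `i` to `j`: a pair of distinct directed paths from `i` to `j`
that are node-disjoint except for their shared start and end nodes. -/
def IsConfluence {V : Type*} (A : V → V → Prop) (i j : V) (l₁ l₂ : List V) : Prop :=
  DiPath A i j l₁ ∧ DiPath A i j l₂ ∧ l₁ ≠ l₂ ∧
  ∀ v ∈ l₁, v ∈ l₂ → v = i ∨ v = j

/-- The confluence edge label assignment: the edge `e` is labeled with `j` iff `e`
lies on some confluence ending in `j`. -/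
def ConfLabel {V : Type*} (A : V → V → Prop) (e : V × V) (j : V) : Prop :=
  ∃ i l₁ l₂, IsConfluence A i j l₁ l₂ ∧ (e ∈ l₁.zip l₁.tail ∨ e ∈ l₂.zip l₂.tail)

/-- The confluence label set of an edge. -/
def ConfSet {V : Type*} (A : V → V → Prop) (e : V × V) : Set V :=
  {j | ConfLabel A e j}

/-- The digraph `A` is acyclic. -/
def Acyclic {V : Type*} (A : V → V → Prop) : Prop :=
  ∀ v, ¬ Relation.TransGen A v v

/-- Every node of the digraph `A` is reachable from the root `r`. -/
def RootedAt {V : Type*} (A : V → V → Prop) (r : V) : Prop :=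
  ∀ v, Relation.ReflTransGen A r v

/-- A list of sets is a running intersection ordering: for each index `a ≥ 1` there is
an earlier index `b` such that `l[a] ∩ (⋃_{c < a} l[c]) ⊆ l[b]`. -/
def RIPs {α : Type*} (l : List (Set α)) : Prop :=
  ∀ (a : ℕ) (ha : a < l.length), 0 < a → ∃ (b : ℕ) (hb : b < l.length), b < a ∧
    ∀ x ∈ l.get ⟨a, ha⟩, (∃ S ∈ l.take a, x ∈ S) → x ∈ l.get ⟨b, hb⟩

/-- An extraction label set ordering `Ω` for the digraph `A` with edge label
assignment `L`: for each node `i`, `Ω i` is a running intersection ordering that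
starts with the incoming label set of `i` (the common label set of `i`'s in-edges,
`∅` if `i` has none), and each out-edge's label set is contained in some listed set. -/
def IsELSO {V : Type*} (A : V → V → Prop) (L : V × V → Set V)
    (Ω : V → List (Set V)) : Prop :=
  ∀ i : V, RIPs (Ω i) ∧
    (∀ j, A j i → (Ω i).head? = some (L (j, i))) ∧
    ((¬ ∃ j, A j i) → (Ω i).head? = some ∅) ∧
    (∀ w, A i w → ∃ S ∈ Ω i, L (i, w) ⊆ S)

/-- The width of an extraction label set ordering: one plus the size of the largest
label set occurring in it. -/
noncomputable def elsoWidth {V : Type*} (Ω : V → List (Set V)) : ℕ :=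
  1 + sSup {m | ∃ i, ∃ S ∈ Ω i, m = S.ncard}

/-- The half-wheel graph with center `0` and outer nodes `1, …, n`:
the center is adjacent to every outer node and consecutive outer nodes are adjacent. -/
def halfWheelAdj (n : ℕ) (v w : Fin (n + 1)) : Prop :=
  v ≠ w ∧ (v = 0 ∨ w = 0 ∨ (v : ℕ) + 1 = (w : ℕ) ∨ (w : ℕ) + 1 = (v : ℕ))


namespace Stmt15

def hwA (n : ℕ) (v w : Fin (n+1)) : Prop :=
  ((v:ℕ) = 0 ∧ (w:ℕ) ≠ 0) ∨
  ((w:ℕ) = (v:ℕ)+1 ∧ Even (v:ℕ) ∧ (v:ℕ) ≠ 0) ∨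
  ((w:ℕ)+1 = (v:ℕ) ∧ Even (v:ℕ))

lemma step2 {n : ℕ} {u v w : Fin (n+1)} (h1 : hwA n u v) (h2 : hwA n v w) :
    (u:ℕ) = 0 ∧ Even (v:ℕ) ∧ (v:ℕ) ≠ 0 ∧ Odd (w:ℕ) ∧
      ((w:ℕ) = (v:ℕ)+1 ∨ (w:ℕ)+1 = (v:ℕ)) := by
  unfold hwA at h1 h2
  simp only [Nat.even_iff, Nat.odd_iff] at *
  omega

lemma pathClass {n : ℕ} {i j : Fin (n+1)} {l : List (Fin (n+1))}
    (h : DiPath (hwA n) i j l) :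
    (l = [i, j] ∧ hwA n i j) ∨
    (∃ m, l = [i, m, j] ∧ hwA n i m ∧ hwA n m j) := by
  obtain ⟨hc, hh, hl, hnd, hlen⟩ := h
  rcases l with _ | ⟨a, _ | ⟨b, _ | ⟨c, _ | ⟨d, rest⟩⟩⟩⟩
  · simp at hlen
  · simp at hlen
  · simp only [List.head?_cons, Option.some.injEq] at hh
    simp only [List.getLast?_cons_cons, List.getLast?_singleton, Option.some.injEq] at hl
    simp only [List.Chain', List.isChain_pair] at hc
    subst hh hl
    exact Or.inl ⟨rfl, hc⟩
  · simp only [List.head?_cons, Option.some.injEq] at hh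
    simp only [List.getLast?_cons_cons, List.getLast?_singleton, Option.some.injEq] at hl
    simp only [List.Chain', List.isChain_cons_cons, List.isChain_singleton, and_true] at hc
    subst hh hl
    exact Or.inr ⟨b, rfl, hc.1, hc.2⟩
  · exfalso
    simp only [List.Chain', List.isChain_cons_cons] at hc
    have h1 := step2 hc.1 hc.2.1
    have h2 := step2 hc.2.1 hc.2.2.1
    simp only [Nat.even_iff, Nat.odd_iff] at h1 h2
    omega

lemma mkConf {n : ℕ} {m j : Fin (n+1)} (hm0 : m ≠ 0) (hj0 : j ≠ 0) (hmj : m ≠ j)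
    (h : hwA n m j) :
    IsConfluence (hwA n) 0 j [0, j] [0, m, j] := by
  have hj0' : (j:ℕ) ≠ 0 := by simpa using hj0
  have hm0' : (m:ℕ) ≠ 0 := by simpa using hm0
  have hA0j : hwA n 0 j := Or.inl ⟨by simp, hj0'⟩
  have hA0m : hwA n 0 m := Or.inl ⟨by simp, hm0'⟩
  refine ⟨⟨?_, rfl, ?_, ?_, ?_⟩, ⟨?_, rfl, ?_, ?_, ?_⟩, ?_, ?_⟩
  · simpa [List.Chain'] using hA0j
  · simp
  · simp [Ne.symm hj0]
  · simp
  · simp [List.Chain', hA0m, h]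
  · simp
  · simp [Ne.symm hj0, Ne.symm hm0, hmj]
  · simp
  · simp
  · intro v hv _
    simpa using hv

lemma confChar {n : ℕ} {e : Fin (n+1) × Fin (n+1)} {j : Fin (n+1)}
    (h : ConfLabel (hwA n) e j) :
    Odd (j:ℕ) ∧ (e = (0, j) ∨ ∃ m : Fin (n+1), Even (m:ℕ) ∧ (m:ℕ) ≠ 0 ∧
      hwA n m j ∧ (e = (0, m) ∨ e = (m, j))) := by
  obtain ⟨i, l₁, l₂, ⟨p₁, p₂, hne, _⟩, he⟩ := h
  have key : ∀ m : Fin (n+1), hwA n i m → hwA n m j →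
      i = 0 ∧ Odd (j:ℕ) ∧ Even (m:ℕ) ∧ (m:ℕ) ≠ 0 := by
    intro m h1 h2
    obtain ⟨hi0, hme, hm0, hjo, _⟩ := step2 h1 h2
    exact ⟨by simpa using hi0, hjo, hme, hm0⟩
  rcases pathClass p₁ with ⟨h1, hA1⟩ | ⟨m1, h1, hA1, hB1⟩ <;>
    rcases pathClass p₂ with ⟨h2, hA2⟩ | ⟨m2, h2, hA2, hB2⟩
  · exact absurd (h1.trans h2.symm) hne
  · obtain ⟨hi0, hjo, hme, hm0⟩ := key m2 hA2 hB2
    subst hi0; subst h1; subst h2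
    refine ⟨hjo, ?_⟩
    simp only [List.zip, List.tail] at he
    rcases he with he | he
    · simp at he; exact Or.inl (by simpa [Prod.ext_iff] using he)
    · simp at he
      rcases he with he | he
      · exact Or.inr ⟨m2, hme, hm0, hB2, Or.inl (by simpa [Prod.ext_iff] using he)⟩
      · exact Or.inr ⟨m2, hme, hm0, hB2, Or.inr (by simpa [Prod.ext_iff] using he)⟩
  · obtain ⟨hi0, hjo, hme, hm0⟩ := key m1 hA1 hB1
    subst hi0; subst h1; subst h2
    refine ⟨hjo, ?_⟩
    rcases he with he | he
    · simp at he
      rcases he with he | he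
      · exact Or.inr ⟨m1, hme, hm0, hB1, Or.inl (by simpa [Prod.ext_iff] using he)⟩
      · exact Or.inr ⟨m1, hme, hm0, hB1, Or.inr (by simpa [Prod.ext_iff] using he)⟩
    · simp at he; exact Or.inl (by simpa [Prod.ext_iff] using he)
  · obtain ⟨hi0, hjo, hme, hm0⟩ := key m1 hA1 hB1
    obtain ⟨_, _, hme2, hm02⟩ := key m2 hA2 hB2
    subst hi0; subst h1; subst h2
    refine ⟨hjo, ?_⟩
    rcases he with he | he
    · simp at he
      rcases he with he | he
      · exact Or.inr ⟨m1, hme, hm0, hB1, Or.inl (by simpa [Prod.ext_iff] using he)⟩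
      · exact Or.inr ⟨m1, hme, hm0, hB1, Or.inr (by simpa [Prod.ext_iff] using he)⟩
    · simp at he
      rcases he with he | he
      · exact Or.inr ⟨m2, hme2, hm02, hB2, Or.inl (by simpa [Prod.ext_iff] using he)⟩
      · exact Or.inr ⟨m2, hme2, hm02, hB2, Or.inr (by simpa [Prod.ext_iff] using he)⟩

lemma confLabel_of_mem {n : ℕ} {m j : Fin (n+1)} (hm0 : m ≠ 0) (hj0 : j ≠ 0)
    (hmj : m ≠ j) (h : hwA n m j) {e : Fin (n+1) × Fin (n+1)}
    (he : e = (0, j) ∨ e = (0, m) ∨ e = (m, j)) : ConfLabel (hwA n) e j := by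
  refine ⟨0, [0, j], [0, m, j], mkConf hm0 hj0 hmj h, ?_⟩
  rcases he with he | he | he <;> subst he
  · exact Or.inl (by simp)
  · exact Or.inr (by simp)
  · exact Or.inr (by simp)

lemma hwA_target {n : ℕ} {m j : Fin (n+1)} (hme : Even (m:ℕ)) (hm0 : (m:ℕ) ≠ 0)
    (h : hwA n m j) : Odd (j:ℕ) ∧ ((j:ℕ) = (m:ℕ)+1 ∨ (j:ℕ)+1 = (m:ℕ)) := by
  unfold hwA at h
  simp only [Nat.even_iff, Nat.odd_iff] at *
  omega

lemma confSet_center_odd {n : ℕ} (hn : 3 ≤ n) {j : Fin (n+1)} (hj : Odd (j:ℕ)) :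
    ConfSet (hwA n) (0, j) = {j} := by
  have hj0 : (j:ℕ) ≠ 0 := by rcases hj with ⟨t, ht⟩; omega
  ext w
  simp only [ConfSet, Set.mem_setOf_eq, Set.mem_singleton_iff]
  constructor
  · intro h
    obtain ⟨hodd, hcase⟩ := confChar h
    rcases hcase with he | ⟨m, hme, hm0, hA, he | he⟩
    · exact ((Prod.ext_iff.mp he).2).symm
    · exfalso
      have : j = m := (Prod.ext_iff.mp he).2
      rw [this] at hj
      simp [Nat.even_iff, Nat.odd_iff] at hme hj; omega
    · exfalso
      have : (0 : Fin (n+1)) = m := (Prod.ext_iff.mp he).1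
      rw [← this] at hm0
      simp at hm0
  · intro h; subst h
    by_cases h1 : (w:ℕ) = 1
    · have h2n : 2 < n + 1 := by omega
      refine confLabel_of_mem (m := ⟨2, h2n⟩) ?_ ?_ ?_ ?_ (Or.inl rfl)
      · simp [Fin.ext_iff]
      · simp [Fin.ext_iff, h1]
      · simp [Fin.ext_iff, h1]
      · exact Or.inr (Or.inr ⟨by simp [h1], by simp [Nat.even_iff]⟩)
    · have hw3 : 3 ≤ (w:ℕ) := by
        rcases hj with ⟨t, ht⟩; omega
      have hlt : (w:ℕ) - 1 < n + 1 := by have := w.isLt; omega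
      obtain ⟨t, ht⟩ := hj
      refine confLabel_of_mem (m := ⟨(w:ℕ) - 1, hlt⟩) ?_ ?_ ?_ ?_ (Or.inl rfl)
      · simp only [ne_eq, Fin.ext_iff, Fin.val_mk, Fin.val_zero]; omega
      · simp only [ne_eq, Fin.ext_iff, Fin.val_zero]; omega
      · simp only [ne_eq, Fin.ext_iff, Fin.val_mk]; omega
      · refine Or.inr (Or.inl ⟨by simp; omega, ?_, by simp; omega⟩)
        simp only [Fin.val_mk, Nat.even_iff]; omega

lemma confSet_center_even {n : ℕ} (hn : 3 ≤ n) {i : Fin (n+1)}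
    (hie : Even (i:ℕ)) (hi0 : (i:ℕ) ≠ 0) :
    ConfSet (hwA n) (0, i) = {x : Fin (n+1) | (x:ℕ)+1 = (i:ℕ) ∨ (x:ℕ) = (i:ℕ)+1} := by
  ext w
  simp only [ConfSet, Set.mem_setOf_eq]
  constructor
  · intro h
    obtain ⟨hodd, hcase⟩ := confChar h
    rcases hcase with he | ⟨m, hme, hm0, hA, he | he⟩
    · exfalso
      have : i = w := (Prod.ext_iff.mp he).2
      rw [← this] at hodd
      simp [Nat.even_iff, Nat.odd_iff] at hie hodd; omega
    · have him : i = m := (Prod.ext_iff.mp he).2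
      subst him
      have := hwA_target hme hm0 hA
      omega
    · exfalso
      have : (0 : Fin (n+1)) = m := (Prod.ext_iff.mp he).1
      rw [← this] at hm0; simp at hm0
  · intro h
    have hwodd : Odd (w:ℕ) := by
      simp only [Nat.even_iff, Nat.odd_iff] at hie ⊢; omega
    have hw0 : (w:ℕ) ≠ 0 := by rcases hwodd with ⟨t, ht⟩; omega
    refine confLabel_of_mem (m := i) (j := w) ?_ ?_ ?_ ?_ (Or.inr (Or.inl rfl))
    · simp only [ne_eq, Fin.ext_iff, Fin.val_zero]; omega
    · simp only [ne_eq, Fin.ext_iff, Fin.val_zero]; omega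
    · simp only [ne_eq, Fin.ext_iff, Fin.val_zero]; omega
    · rcases h with h | h
      · exact Or.inr (Or.inr ⟨h, hie⟩)
      · exact Or.inr (Or.inl ⟨h, hie, hi0⟩)

lemma confSet_outer {n : ℕ} (hn : 3 ≤ n) {i j : Fin (n+1)} (hie : Even (i:ℕ))
    (hi0 : (i:ℕ) ≠ 0) (hA : hwA n i j) : ConfSet (hwA n) (i, j) = {j} := by
  obtain ⟨hjo, hj1⟩ := hwA_target hie hi0 hA
  have hj0 : (j:ℕ) ≠ 0 := by rcases hjo with ⟨t, ht⟩; omega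
  ext w
  simp only [ConfSet, Set.mem_setOf_eq, Set.mem_singleton_iff]
  constructor
  · intro h
    obtain ⟨hodd, hcase⟩ := confChar h
    rcases hcase with he | ⟨m, hme, hm0, hA', he | he⟩
    · exfalso
      have : i = (0 : Fin (n+1)) := (Prod.ext_iff.mp he).1
      rw [this] at hi0; simp at hi0
    · exfalso
      have : i = (0 : Fin (n+1)) := (Prod.ext_iff.mp he).1
      rw [this] at hi0; simp at hi0
    · exact ((Prod.ext_iff.mp he).2).symm
  · intro h; subst h
    exact confLabel_of_mem (by simp only [ne_eq, Fin.ext_iff, Fin.val_zero]; omega)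
      (by simp only [ne_eq, Fin.ext_iff, Fin.val_zero]; omega) (by simp only [ne_eq, Fin.ext_iff, Fin.val_zero]; omega) hA
      (Or.inr (Or.inr rfl))

lemma pairSet_ncard {n a b : ℕ} (ha : a < n+1) (hb : b < n+1) (hab : a ≠ b) :
    Set.ncard {x : Fin (n+1) | (x:ℕ) = a ∨ (x:ℕ) = b} = 2 := by
  have : {x : Fin (n+1) | (x:ℕ) = a ∨ (x:ℕ) = b} = {⟨a, ha⟩, ⟨b, hb⟩} := by
    ext x; simp [Fin.ext_iff]
  rw [this, Set.ncard_pair (by simp [Fin.ext_iff, hab])]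

def hwPair (n k : ℕ) : Set (Fin (n+1)) := {x | (x:ℕ) = 2*k+1 ∨ (x:ℕ) = 2*k+3}

def hwIn (n : ℕ) (i : Fin (n+1)) : Set (Fin (n+1)) :=
  {x | (x:ℕ)+1 = (i:ℕ) ∨ (x:ℕ) = (i:ℕ)+1}

noncomputable def hwΩ (n : ℕ) (i : Fin (n+1)) : List (Set (Fin (n+1))) :=
  if (i:ℕ) = 0 then (∅ : Set (Fin (n+1))) :: (List.range ((n-1)/2)).map (hwPair n)
  else if Even (i:ℕ) then [hwIn n i] else [{i}]

noncomputable def hwRank (n : ℕ) (v : Fin (n+1)) : ℕ :=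
  if (v:ℕ) = 0 then 0 else if Even (v:ℕ) then 1 else 2

lemma hwRank_lt {n : ℕ} {v w : Fin (n+1)} (h : hwA n v w) :
    hwRank n v < hwRank n w := by
  unfold hwA at h
  unfold hwRank
  simp only [Nat.even_iff] at *
  split_ifs <;> omega

lemma hwA_acyclic (n : ℕ) : Acyclic (hwA n) := by
  intro v hv
  have key : ∀ w, Relation.TransGen (hwA n) v w → hwRank n v < hwRank n w := by
    intro w h
    induction h with
    | single h => exact hwRank_lt h
    | tail _ h ih => exact ih.trans (hwRank_lt h)
  exact absurd (key v hv) (lt_irrefl _)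

lemma hwA_rooted (n : ℕ) : RootedAt (hwA n) 0 := by
  intro v
  by_cases hv : v = 0
  · subst hv; exact Relation.ReflTransGen.refl
  · exact Relation.ReflTransGen.single
      (Or.inl ⟨by simp, by simpa [ne_eq] using hv⟩)

lemma hwA_sub {n : ℕ} {v w : Fin (n+1)} (h : hwA n v w) : halfWheelAdj n v w := by
  constructor
  · unfold hwA at h
    simp only [Nat.even_iff] at h
    simp only [ne_eq, Fin.ext_iff]
    omega
  · rcases h with ⟨h1, h2⟩ | ⟨h1, _, _⟩ | ⟨h1, _⟩
    · exact Or.inl (by simp [Fin.ext_iff, h1])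
    · exact Or.inr (Or.inr (Or.inl h1.symm))
    · exact Or.inr (Or.inr (Or.inr h1))

lemma hwA_total {n : ℕ} {v w : Fin (n+1)} (h : halfWheelAdj n v w) :
    hwA n v w ∨ hwA n w v := by
  obtain ⟨hne, hadj⟩ := h
  have hne' : (v:ℕ) ≠ (w:ℕ) := by simpa [ne_eq, Fin.ext_iff] using hne
  rcases hadj with h | h | h | h
  · subst h
    exact Or.inl (Or.inl ⟨by simp, by simpa using hne'.symm⟩)
  · subst h
    exact Or.inr (Or.inl ⟨by simp, by simpa using hne'⟩)
  · rcases Nat.even_or_odd (v:ℕ) with hv | hv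
    · by_cases hv0 : (v:ℕ) = 0
      · exact Or.inl (Or.inl ⟨hv0, by omega⟩)
      · exact Or.inl (Or.inr (Or.inl ⟨h.symm, hv, hv0⟩))
    · refine Or.inr (Or.inr (Or.inr ⟨h, ?_⟩))
      rw [Nat.odd_iff] at hv
      rw [Nat.even_iff]
      omega
  · rcases Nat.even_or_odd (w:ℕ) with hw | hw
    · by_cases hw0 : (w:ℕ) = 0
      · exact Or.inr (Or.inl ⟨hw0, by omega⟩)
      · exact Or.inr (Or.inr (Or.inl ⟨h.symm, hw, hw0⟩))
    · refine Or.inl (Or.inr (Or.inr ⟨h, ?_⟩))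
      rw [Nat.odd_iff] at hw
      rw [Nat.even_iff]
      omega

lemma hwA_antisymm {n : ℕ} (v w : Fin (n+1)) : ¬ (hwA n v w ∧ hwA n w v) := by
  rintro ⟨h1, h2⟩
  unfold hwA at h1 h2
  simp only [Nat.even_iff] at h1 h2
  omega

lemma hwA_no_in_zero {n : ℕ} {j : Fin (n+1)} (h : hwA n j 0) : False := by
  unfold hwA at h
  simp only [Fin.val_zero, Nat.even_iff] at h
  omega

lemma hwΩ_zero_RIPs (n : ℕ) : RIPs (hwΩ n 0) := by
  set M := (n-1)/2 with hM
  have hL : hwΩ n 0 = (∅ : Set (Fin (n+1))) :: (List.range M).map (hwPair n) := by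
    simp [hwΩ, hM]
  rw [hL]
  intro a ha hpos
  have hlen : ((∅ : Set (Fin (n+1))) :: (List.range M).map (hwPair n)).length = M + 1 := by
    simp
  rcases a with _ | a'
  · omega
  · refine ⟨a', by omega, by omega, ?_⟩
    intro x hx hex
    rw [hlen] at ha
    have ha' : a' < M := by omega
    rw [List.get_eq_getElem, List.getElem_cons_succ, List.getElem_map,
      List.getElem_range] at hx
    obtain ⟨S, hS, hxS⟩ := hex
    rw [List.take_succ_cons] at hS
    rcases List.mem_cons.mp hS with rfl | hS
    · exact absurd hxS (Set.notMem_empty x)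
    · rw [← List.map_take, List.take_range] at hS
      obtain ⟨c, hc, rfl⟩ := List.mem_map.mp hS
      rw [List.mem_range] at hc
      have hc' : c < a' := by omega
      have hxval : (x:ℕ) = 2*c+1 ∨ (x:ℕ) = 2*c+3 := hxS
      rcases a' with _ | b
      · omega
      · rw [List.get_eq_getElem, List.getElem_cons_succ, List.getElem_map,
          List.getElem_range]
        have hx' : (x:ℕ) = 2*(b+1)+1 ∨ (x:ℕ) = 2*(b+1)+3 := hx
        show (x:ℕ) = 2*b+1 ∨ (x:ℕ) = 2*b+3
        omega

lemma hw_elso {n : ℕ} (hn : 3 ≤ n) (hodd : Odd n) :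
    IsELSO (hwA n) (ConfSet (hwA n)) (hwΩ n) := by
  intro i
  by_cases hi0 : (i:ℕ) = 0
  · have hi : i = 0 := by simpa using hi0
    subst hi
    refine ⟨hwΩ_zero_RIPs n, ?_, ?_, ?_⟩
    · intro j hj; exact absurd hj (fun h => hwA_no_in_zero h)
    · intro _; simp [hwΩ]
    · intro w hw
      have hw0 : (w:ℕ) ≠ 0 := by
        unfold hwA at hw; simp only [Fin.val_zero, Nat.even_iff] at hw; omega
      obtain ⟨t, ht⟩ := hodd
      have hwle : (w:ℕ) ≤ n := by have := w.isLt; omega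
      have hΩ0 : hwΩ n 0 = (∅ : Set (Fin (n+1))) ::
          (List.range ((n-1)/2)).map (hwPair n) := by simp [hwΩ]
      rcases Nat.even_or_odd (w:ℕ) with hwe | hwo
      · have hwe' := Nat.even_iff.mp hwe
        refine ⟨hwPair n (((w:ℕ)-2)/2), ?_, ?_⟩
        · rw [hΩ0]
          exact List.mem_cons_of_mem _
            (List.mem_map_of_mem (List.mem_range.mpr (by omega)))
        · rw [confSet_center_even hn hwe hw0]
          intro x hx
          have hx' : (x:ℕ)+1 = (w:ℕ) ∨ (x:ℕ) = (w:ℕ)+1 := hx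
          show (x:ℕ) = 2*(((w:ℕ)-2)/2)+1 ∨ (x:ℕ) = 2*(((w:ℕ)-2)/2)+3
          omega
      · have hwo' := Nat.odd_iff.mp hwo
        refine ⟨hwPair n (min (((w:ℕ)-1)/2) ((n-1)/2 - 1)), ?_, ?_⟩
        · rw [hΩ0]
          exact List.mem_cons_of_mem _
            (List.mem_map_of_mem (List.mem_range.mpr (by omega)))
        · rw [confSet_center_odd hn hwo]
          intro x hx
          rw [Set.mem_singleton_iff] at hx
          subst hx
          show (x:ℕ) = 2*(min (((x:ℕ)-1)/2) ((n-1)/2 - 1))+1 ∨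
            (x:ℕ) = 2*(min (((x:ℕ)-1)/2) ((n-1)/2 - 1))+3
          omega
  · rcases Nat.even_or_odd (i:ℕ) with hie | hio
    · have hΩ : hwΩ n i = [hwIn n i] := by simp [hwΩ, hi0, hie]
      refine ⟨?_, ?_, ?_, ?_⟩
      · rw [hΩ]; intro a ha hpos; simp at ha; omega
      · intro j hj
        have hj0 : (j:ℕ) = 0 := by
          unfold hwA at hj
          rw [Nat.even_iff] at hie
          simp only [Nat.even_iff] at hj
          omega
        have hj' : j = 0 := by simpa using hj0
        subst hj'
        rw [hΩ, confSet_center_even hn hie hi0]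
        rfl
      · intro h; exact absurd ⟨0, Or.inl ⟨by simp, hi0⟩⟩ h
      · intro w hw
        refine ⟨hwIn n i, by rw [hΩ]; exact List.mem_singleton_self _, ?_⟩
        rw [confSet_outer hn hie hi0 hw]
        intro x hx
        rw [Set.mem_singleton_iff] at hx
        subst hx
        show (x:ℕ)+1 = (i:ℕ) ∨ (x:ℕ) = (i:ℕ)+1
        unfold hwA at hw
        simp only [Nat.even_iff] at hw
        omega
    · have hie : ¬ Even (i:ℕ) := by
        rw [Nat.even_iff, Nat.odd_iff.mp hio]; omega
      have hΩ : hwΩ n i = [{i}] := by simp [hwΩ, hi0, hie]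
      refine ⟨?_, ?_, ?_, ?_⟩
      · rw [hΩ]; intro a ha hpos; simp at ha; omega
      · intro j hj
        by_cases hj0 : (j:ℕ) = 0
        · have hj' : j = 0 := by simpa using hj0
          subst hj'
          rw [hΩ, confSet_center_odd hn hio]
          rfl
        · have hje : Even (j:ℕ) := by
            rcases hj with ⟨h1, _⟩ | ⟨_, h2, _⟩ | ⟨_, h2⟩
            · exact absurd h1 hj0
            · exact h2
            · exact h2
          rw [hΩ, confSet_outer hn hje hj0 hj]
          rfl
      · intro h; exact absurd ⟨0, Or.inl ⟨by simp, hi0⟩⟩ h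
      · intro w hw
        exfalso
        unfold hwA at hw
        rw [Nat.odd_iff] at hio
        simp only [Nat.even_iff] at hw
        omega

lemma hw_width {n : ℕ} (hn : 3 ≤ n) (hodd : Odd n) : elsoWidth (hwΩ n) = 3 := by
  obtain ⟨t, ht⟩ := hodd
  have h2 : 2 ∈ {m | ∃ i, ∃ S ∈ hwΩ n i, m = S.ncard} := by
    refine ⟨0, hwPair n 0, ?_, ?_⟩
    · have hΩ0 : hwΩ n 0 = (∅ : Set (Fin (n+1))) ::
          (List.range ((n-1)/2)).map (hwPair n) := by simp [hwΩ]
      rw [hΩ0]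
      exact List.mem_cons_of_mem _
        (List.mem_map_of_mem (List.mem_range.mpr (by omega)))
    · exact (pairSet_ncard (a := 1) (b := 3) (by omega) (by omega) (by omega)).symm
  have hub : ∀ m ∈ {m | ∃ i, ∃ S ∈ hwΩ n i, m = S.ncard}, m ≤ 2 := by
    rintro m ⟨i, S, hS, rfl⟩
    by_cases hi0 : (i:ℕ) = 0
    · rw [show hwΩ n i = (∅ : Set (Fin (n+1))) ::
          (List.range ((n-1)/2)).map (hwPair n) from by simp [hwΩ, hi0]] at hS
      rcases List.mem_cons.mp hS with rfl | hS
      · simp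
      · obtain ⟨c, hc, rfl⟩ := List.mem_map.mp hS
        rw [List.mem_range] at hc
        have hp : (hwPair n c).ncard = 2 :=
          pairSet_ncard (by omega) (by omega) (by omega)
        omega
    · rcases Nat.even_or_odd (i:ℕ) with hie | hio
      · rw [show hwΩ n i = [hwIn n i] from by simp [hwΩ, hi0, hie]] at hS
        rw [List.mem_singleton] at hS
        subst hS
        have hie' := Nat.even_iff.mp hie
        have hlt : (i:ℕ) < n := by have := i.isLt; omega
        have heq : hwIn n i =
            {x : Fin (n+1) | (x:ℕ) = (i:ℕ)-1 ∨ (x:ℕ) = (i:ℕ)+1} := by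
          ext x
          simp only [hwIn, Set.mem_setOf_eq]
          omega
        rw [heq, pairSet_ncard (by omega) (by omega) (by omega)]
      · have hie : ¬ Even (i:ℕ) := by
          rw [Nat.even_iff, Nat.odd_iff.mp hio]; omega
        rw [show hwΩ n i = [{i}] from by simp [hwΩ, hi0, hie]] at hS
        rw [List.mem_singleton] at hS
        subst hS
        simp
  have hset : sSup {m | ∃ i, ∃ S ∈ hwΩ n i, m = S.ncard} = 2 :=
    le_antisymm (csSup_le ⟨2, h2⟩ hub) (le_csSup ⟨2, hub⟩ h2)
  rw [elsoWidth, hset]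

end Stmt15

/-- For the half-wheel graph with `n` outer nodes (`n` odd), there is an extraction
order rooted at the center node together with an extraction label set ordering (for
the confluence edge label assignment) of extraction label width exactly `3`. -/
theorem stmt15 (n : ℕ) (hn : 3 ≤ n) (hodd : Odd n) :
    ∃ (A : Fin (n + 1) → Fin (n + 1) → Prop) (Ω : Fin (n + 1) → List (Set (Fin (n + 1)))),
      (∀ v w, A v w → halfWheelAdj n v w) ∧
      (∀ v w, halfWheelAdj n v w → A v w ∨ A w v) ∧
      (∀ v w, ¬ (A v w ∧ A w v)) ∧
      Acyclic A ∧ RootedAt A 0 ∧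
      IsELSO A (ConfSet A) Ω ∧ elsoWidth Ω = 3 := by
  exact ⟨Stmt15.hwA n, Stmt15.hwΩ n, fun v w h => Stmt15.hwA_sub h,
    fun v w h => Stmt15.hwA_total h, Stmt15.hwA_antisymm, Stmt15.hwA_acyclic n,
    Stmt15.hwA_rooted n, Stmt15.hw_elso hn hodd, Stmt15.hw_width hn hodd⟩
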